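/- Let ν be an atomless probability measure on a measurable space Ω, let S ⊆ Ω be measurable, and let n ∈ ℕ. Then there exists a partition of Ω into measurable sets D_1, …, D_{2^n}, pairwise disjoint with union Ω and ν(D_k) = 2^{-n} for all k, such that at least ⌊2^n · ν(S)⌋ of the sets D_k satisfy ν(D_k \ S) = 0 and at least ⌊2^n · ν(Ω \ S)⌋ of the sets D_k satisfy ν(D_k ∩ S) = 0. -/

import Mathlib

open MeasureTheory
open scoped ENNReal

attribute [local instance] Classical.propDecidable

theorem aux_half {Ω : Type*} [MeasurableSpace Ω] (ν : Measure Ω) [IsFiniteMeasure ν]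
    (hatomless : ∀ A : Set Ω, MeasurableSet A → 0 < ν A →
      ∃ B ⊆ A, MeasurableSet B ∧ 0 < ν B ∧ ν B < ν A)
    {A : Set Ω} (hA : MeasurableSet A) (h0 : 0 < ν A) :
    ∃ B ⊆ A, MeasurableSet B ∧ 0 < ν B ∧ ν B ≤ ν A / 2 := by
  obtain ⟨C, hCA, hCm, hC0, hClt⟩ := hatomless A hA h0
  by_cases hC : ν C ≤ ν A / 2
  · exact ⟨C, hCA, hCm, hC0, hC⟩
  · refine ⟨A \ C, Set.diff_subset, hA.diff hCm, ?_, ?_⟩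
    · have : ν (A \ C) = ν A - ν C := measure_diff hCA hCm.nullMeasurableSet (measure_ne_top ν C)
      rw [this]
      exact tsub_pos_of_lt hClt
    · have hd : ν (A \ C) = ν A - ν C := measure_diff hCA hCm.nullMeasurableSet (measure_ne_top ν C)
      rw [hd]
      push_neg at hC
      have h2 : ν A / 2 ≤ ν C := hC.le
      calc ν A - ν C ≤ ν A - ν A / 2 := tsub_le_tsub_left h2 _
        _ = ν A / 2 := ENNReal.sub_half (measure_ne_top ν A)

theorem aux_small {Ω : Type*} [MeasurableSpace Ω] (ν : Measure Ω) [IsFiniteMeasure ν]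
    (hatomless : ∀ A : Set Ω, MeasurableSet A → 0 < ν A →
      ∃ B ⊆ A, MeasurableSet B ∧ 0 < ν B ∧ ν B < ν A)
    {A : Set Ω} (hA : MeasurableSet A) (h0 : 0 < ν A) {ε : ℝ≥0∞} (hε : 0 < ε) :
    ∃ B ⊆ A, MeasurableSet B ∧ 0 < ν B ∧ ν B < ε := by
  have key : ∀ k : ℕ, ∃ B ⊆ A, MeasurableSet B ∧ 0 < ν B ∧ ν B ≤ ν A / 2 ^ k := by
    intro k
    induction k with
    | zero => exact ⟨A, le_rfl, hA, h0, by simp⟩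
    | succ k ih =>
      obtain ⟨B, hBA, hBm, hB0, hBle⟩ := ih
      obtain ⟨C, hCB, hCm, hC0, hCle⟩ := aux_half ν hatomless hBm hB0
      refine ⟨C, hCB.trans hBA, hCm, hC0, ?_⟩
      calc ν C ≤ ν B / 2 := hCle
        _ ≤ ν A / 2 ^ k / 2 := by exact ENNReal.div_le_div_right hBle 2
        _ = ν A / 2 ^ (k + 1) := by rw [div_eq_mul_inv, div_eq_mul_inv, div_eq_mul_inv, mul_assoc]; congr 1; rw [ENNReal.inv_pow, ENNReal.inv_pow, pow_succ]
  obtain ⟨k, hk⟩ : ∃ k : ℕ, ν A / 2 ^ k < ε := by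
    have := ENNReal.exists_inv_two_pow_lt (a := ε / (ν A + 1)) ?_
    · obtain ⟨k, hk⟩ := this
      refine ⟨k, ?_⟩
      have h1 : ν A / 2 ^ k ≤ (ν A + 1) * 2⁻¹ ^ k := by
        rw [div_eq_mul_inv, ← ENNReal.inv_pow]
        exact mul_le_mul_left (le_add_right le_rfl) _
      calc ν A / 2 ^ k ≤ (ν A + 1) * 2⁻¹ ^ k := h1
        _ < (ν A + 1) * (ε / (ν A + 1)) := by
            exact ENNReal.mul_lt_mul_iff_right (by simp) (by simp [measure_ne_top]) |>.mpr hk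
        _ ≤ ε := ENNReal.mul_div_le
    · simp only [ne_eq, ENNReal.div_eq_zero_iff, not_or]
      exact ⟨hε.ne', by simp [measure_ne_top]⟩
  obtain ⟨B, hBA, hBm, hB0, hBle⟩ := key k
  exact ⟨B, hBA, hBm, hB0, lt_of_le_of_lt hBle hk⟩


theorem aux_exact {Ω : Type*} [MeasurableSpace Ω] (ν : Measure Ω) [IsFiniteMeasure ν]
    (hatomless : ∀ A : Set Ω, MeasurableSet A → 0 < ν A →
      ∃ B ⊆ A, MeasurableSet B ∧ 0 < ν B ∧ ν B < ν A)
    {A : Set Ω} (hA : MeasurableSet A) {r : ℝ≥0∞} (hr : r ≤ ν A) :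
    ∃ B ⊆ A, MeasurableSet B ∧ ν B = r := by
  classical
  set Q : Set Ω → Prop := fun B => B ⊆ A ∧ MeasurableSet B ∧ ν B ≤ r with hQdef
  set sup : Set Ω → ℝ≥0∞ := fun B => ⨆ (C : Set Ω) (_ : Q C ∧ B ⊆ C), ν C with hsupdef
  have hsup_ne_top : ∀ B, sup B ≠ ∞ := by
    intro B
    have : sup B ≤ r := by
      apply iSup_le; intro C; apply iSup_le; intro hC; exact hC.1.2.2
    exact (this.trans_lt (hr.trans_lt (measure_lt_top ν A))).ne
  have step : ∀ (k : ℕ) (B : Set Ω), Q B → ∃ C, Q C ∧ B ⊆ C ∧ sup B ≤ ν C + 2⁻¹ ^ k := by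
    intro k B hB
    by_cases h : sup B ≤ 2⁻¹ ^ k
    · exact ⟨B, hB, le_rfl, h.trans (le_add_left le_rfl)⟩
    · push_neg at h
      have hlt : sup B - 2⁻¹ ^ k < sup B := by
        apply ENNReal.sub_lt_self (hsup_ne_top B)
        · exact (pos_of_gt h).ne'
        · exact (ENNReal.pow_pos (by simp) k).ne'
      rw [hsupdef] at hlt
      simp only [lt_iSup_iff] at hlt
      obtain ⟨C, hC, hCv⟩ := hlt
      exact ⟨C, hC.1, hC.2, tsub_le_iff_right.mp hCv.le⟩
  choose g hgQ hgsub hgs using step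
  have hQ0 : Q ∅ := ⟨Set.empty_subset A, MeasurableSet.empty, by simp⟩
  let f : ℕ → {B : Set Ω // Q B} := fun k =>
    Nat.rec ⟨∅, hQ0⟩ (fun k p => ⟨g k p.1 p.2, hgQ k p.1 p.2⟩) k
  have hfsucc : ∀ k, (f (k + 1)).1 = g k (f k).1 (f k).2 := fun k => rfl
  have hmono : Monotone fun k => (f k).1 := by
    apply monotone_nat_of_le_succ
    intro k
    rw [hfsucc]
    exact hgsub k (f k).1 (f k).2
  set B : Set Ω := ⋃ k, (f k).1 with hBdef
  have hBA : B ⊆ A := Set.iUnion_subset fun k => (f k).2.1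
  have hBm : MeasurableSet B := MeasurableSet.iUnion fun k => (f k).2.2.1
  have hBmeas : ν B = ⨆ k, ν (f k).1 :=
    (Monotone.directed_le hmono).measure_iUnion
  have hBr : ν B ≤ r := by
    rw [hBmeas]; exact iSup_le fun k => (f k).2.2.2
  refine ⟨B, hBA, hBm, ?_⟩
  by_contra hne
  have hlt : ν B < r := lt_of_le_of_ne hBr hne
  have hABpos : 0 < ν (A \ B) := by
    rw [measure_diff hBA hBm.nullMeasurableSet (measure_ne_top ν B)]
    exact tsub_pos_of_lt (hlt.trans_le hr)
  have hεpos : 0 < r - ν B := tsub_pos_of_lt hlt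
  obtain ⟨F, hFAB, hFm, hF0, hFε⟩ := aux_small ν hatomless (hA.diff hBm) hABpos hεpos
  have hdisj : Disjoint B F := (Set.disjoint_sdiff_right (s := B) (t := A)).mono_right hFAB
  have hCmeas : ν (B ∪ F) = ν B + ν F := measure_union hdisj hFm
  have hQC : Q (B ∪ F) := by
    refine ⟨Set.union_subset hBA (hFAB.trans Set.diff_subset), hBm.union hFm, ?_⟩
    rw [hCmeas]
    calc ν B + ν F ≤ ν B + (r - ν B) := add_le_add_right hFε.le _
      _ = r := add_tsub_cancel_of_le hBr
  have hkey : ∀ k, ν F ≤ 2⁻¹ ^ k := by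
    intro k
    have h1 : ν (B ∪ F) ≤ sup (f k).1 := by
      rw [hsupdef]
      refine le_iSup_of_le (B ∪ F) ?_
      exact le_iSup_of_le ⟨hQC, (Set.subset_iUnion (fun k => (f k).1) k).trans Set.subset_union_left⟩ le_rfl
    have h2 : sup (f k).1 ≤ ν (f (k + 1)).1 + 2⁻¹ ^ k := by
      rw [hfsucc]; exact hgs k (f k).1 (f k).2
    have h3 : ν (f (k + 1)).1 ≤ ν B := measure_mono (Set.subset_iUnion (fun k => (f k).1) (k + 1))
    have h4 : ν B + ν F ≤ ν B + 2⁻¹ ^ k := by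
      calc ν B + ν F = ν (B ∪ F) := hCmeas.symm
        _ ≤ sup (f k).1 := h1
        _ ≤ ν (f (k + 1)).1 + 2⁻¹ ^ k := h2
        _ ≤ ν B + 2⁻¹ ^ k := add_le_add_left h3 _
    exact (ENNReal.add_le_add_iff_left (measure_ne_top ν B)).mp h4
  obtain ⟨k, hk⟩ := ENNReal.exists_inv_two_pow_lt hF0.ne'
  exact absurd (hkey k) (not_le.mpr hk)


theorem aux_family {Ω : Type*} [MeasurableSpace Ω] (ν : Measure Ω) [IsFiniteMeasure ν]
    (hatomless : ∀ A : Set Ω, MeasurableSet A → 0 < ν A →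
      ∃ B ⊆ A, MeasurableSet B ∧ 0 < ν B ∧ ν B < ν A)
    (c : ℝ≥0∞) (m : ℕ) :
    ∀ (A : Set Ω), MeasurableSet A → (m : ℝ≥0∞) * c ≤ ν A →
    ∃ E : Fin m → Set Ω, (∀ k, E k ⊆ A) ∧ (∀ k, MeasurableSet (E k)) ∧
      (∀ k, ν (E k) = c) ∧ Pairwise (Function.onFun Disjoint E) := by
  induction m with
  | zero =>
    intro A hA _
    exact ⟨fun k => k.elim0, fun k => k.elim0, fun k => k.elim0, fun k => k.elim0,
      fun i => i.elim0⟩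
  | succ m ih =>
    intro A hA hle
    have hc : c ≤ ν A := by
      refine le_trans ?_ hle
      calc c = 1 * c := (one_mul c).symm
        _ ≤ (m + 1 : ℝ≥0∞) * c := mul_le_mul_left (by simp) c
        _ = ((m + 1 : ℕ) : ℝ≥0∞) * c := by push_cast; ring_nf
    obtain ⟨E0, hE0A, hE0m, hE0v⟩ := aux_exact ν hatomless hA hc
    have hcne : c ≠ ∞ := by
      rw [← hE0v]; exact measure_ne_top ν E0
    have hdiff : ν (A \ E0) = ν A - c := by
      rw [measure_diff hE0A hE0m.nullMeasurableSet (by rw [hE0v]; exact hcne), hE0v]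
    have hsum : ν (A \ E0) + c = ν A := by rw [hdiff]; exact tsub_add_cancel_of_le hc
    have hle' : (m : ℝ≥0∞) * c ≤ ν (A \ E0) := by
      refine (ENNReal.add_le_add_iff_right hcne).mp ?_
      calc (m : ℝ≥0∞) * c + c = ((m + 1 : ℕ) : ℝ≥0∞) * c := by push_cast; ring
        _ ≤ ν A := hle
        _ = ν (A \ E0) + c := hsum.symm
    obtain ⟨E', hE'A, hE'm, hE'v, hE'd⟩ := ih (A \ E0) (hA.diff hE0m) hle'
    refine ⟨Fin.cons E0 E', ?_, ?_, ?_, ?_⟩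
    · intro k
      refine Fin.cases ?_ ?_ k
      · simpa using hE0A
      · intro i; simpa using (hE'A i).trans Set.diff_subset
    · intro k
      refine Fin.cases ?_ ?_ k
      · simpa using hE0m
      · intro i; simpa using hE'm i
    · intro k
      refine Fin.cases ?_ ?_ k
      · simpa using hE0v
      · intro i; simpa using hE'v i
    · intro i j hij
      have hdisj0 : ∀ y, Disjoint E0 (E' y) :=
        fun y => (Set.disjoint_sdiff_right).mono_right (hE'A y)
      rcases Fin.eq_zero_or_eq_succ i with hi | ⟨yi, hyi⟩ <;>
        rcases Fin.eq_zero_or_eq_succ j with hj | ⟨yj, hyj⟩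
      · exact absurd (hi.trans hj.symm) hij
      · rw [Function.onFun, hi, hyj, Fin.cons_zero, Fin.cons_succ]; exact hdisj0 yj
      · rw [Function.onFun, hyi, hj, Fin.cons_succ, Fin.cons_zero]; exact (hdisj0 yi).symm
      · rw [Function.onFun, hyi, hyj, Fin.cons_succ, Fin.cons_succ]
        exact hE'd (fun h => hij (by rw [hyi, hyj, h]))


theorem aux_floor_mul {x : ℝ≥0∞} (hx : x ≠ ∞) (n : ℕ) :
    (⌊(2 ^ n : ℝ) * x.toReal⌋₊ : ℝ≥0∞) * ((2 : ℝ≥0∞) ^ n)⁻¹ ≤ x := by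
  have h1 : (⌊(2 ^ n : ℝ) * x.toReal⌋₊ : ℝ) ≤ 2 ^ n * x.toReal :=
    Nat.floor_le (by positivity)
  rw [← ENNReal.ofReal_toReal hx,
    ENNReal.le_ofReal_iff_toReal_le
      (ENNReal.mul_ne_top (ENNReal.natCast_ne_top _)
        (ENNReal.inv_ne_top.mpr (by positivity))) ENNReal.toReal_nonneg,
    ENNReal.ofReal_toReal hx, ENNReal.toReal_mul, ENNReal.toReal_inv]
  have h2 : ((2 : ℝ≥0∞) ^ n).toReal = (2 : ℝ) ^ n := by
    rw [ENNReal.toReal_pow]; norm_num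
  rw [h2, ENNReal.toReal_natCast]
  calc (⌊(2 ^ n : ℝ) * x.toReal⌋₊ : ℝ) * ((2 : ℝ) ^ n)⁻¹
      ≤ (2 ^ n * x.toReal) * ((2 : ℝ) ^ n)⁻¹ :=
        mul_le_mul_of_nonneg_right h1 (by positivity)
    _ = x.toReal := by field_simp

theorem main_thm
    {Ω : Type*} [MeasurableSpace Ω] (ν : Measure Ω) [IsProbabilityMeasure ν]
    (hatomless : ∀ A : Set Ω, MeasurableSet A → 0 < ν A →
      ∃ B ⊆ A, MeasurableSet B ∧ 0 < ν B ∧ ν B < ν A)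
    (S : Set Ω) (hS : MeasurableSet S) (n : ℕ) :
    ∃ D : Fin (2 ^ n) → Set Ω,
      (∀ k, MeasurableSet (D k)) ∧
      Pairwise (Function.onFun Disjoint D) ∧
      (⋃ k, D k) = Set.univ ∧
      (∀ k, ν (D k) = (2 ^ n : ℝ≥0∞)⁻¹) ∧
      ⌊(2 ^ n : ℝ) * (ν S).toReal⌋₊ ≤
        (Finset.univ.filter fun k => ν (D k \ S) = 0).card ∧
      ⌊(2 ^ n : ℝ) * (ν Sᶜ).toReal⌋₊ ≤
        (Finset.univ.filter fun k => ν (D k ∩ S) = 0).card := by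
  classical
  set N : ℕ := 2 ^ n with hNdef
  set c : ℝ≥0∞ := ((2 : ℝ≥0∞) ^ n)⁻¹ with hcdef
  have hcne : c ≠ ∞ := ENNReal.inv_ne_top.mpr (by positivity)
  have hNc : (N : ℝ≥0∞) * c = 1 := by
    rw [hNdef, hcdef]
    push_cast
    exact ENNReal.mul_inv_cancel (by positivity) (by simp)
  have hNpos : 0 < N := by positivity
  set m : ℕ := ⌊(2 ^ n : ℝ) * (ν S).toReal⌋₊ with hmdef
  set m' : ℕ := ⌊(2 ^ n : ℝ) * (ν Sᶜ).toReal⌋₊ with hm'def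
  have hmc : (m : ℝ≥0∞) * c ≤ ν S := aux_floor_mul (measure_ne_top ν S) n
  have hm'c : (m' : ℝ≥0∞) * c ≤ ν Sᶜ := aux_floor_mul (measure_ne_top ν Sᶜ) n
  have hab : ν S + ν Sᶜ = 1 := by
    rw [measure_add_measure_compl hS, measure_univ]
  -- real facts
  have habR : (ν S).toReal + (ν Sᶜ).toReal = 1 := by
    rw [← ENNReal.toReal_add (measure_ne_top ν S) (measure_ne_top ν Sᶜ), hab]
    simp
  have hmm'N : m + m' ≤ N := by
    have h1 : (m : ℝ) ≤ 2 ^ n * (ν S).toReal := Nat.floor_le (by positivity)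
    have h2 : (m' : ℝ) ≤ 2 ^ n * (ν Sᶜ).toReal := Nat.floor_le (by positivity)
    have h3 : ((m + m' : ℕ) : ℝ) ≤ ((N : ℕ) : ℝ) := by
      push_cast
      rw [hNdef]
      push_cast
      nlinarith [habR]
    exact_mod_cast h3
  have hNmm' : N ≤ m + m' + 1 := by
    have h1 : 2 ^ n * (ν S).toReal < m + 1 := Nat.lt_floor_add_one _
    have h2 : 2 ^ n * (ν Sᶜ).toReal < m' + 1 := Nat.lt_floor_add_one _
    have h3 : ((N : ℕ) : ℝ) < ((m + m' + 2 : ℕ) : ℝ) := by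
      push_cast
      rw [hNdef]
      push_cast
      nlinarith [habR]
    have : N < m + m' + 2 := by exact_mod_cast h3
    omega
  have hmN : m ≤ N := by omega
  obtain ⟨E, hEsub, hEm, hEv, hEd⟩ := aux_family ν hatomless c m S hS hmc
  obtain ⟨E', hE'sub, hE'm, hE'v, hE'd⟩ := aux_family ν hatomless c m' Sᶜ hS.compl hm'c
  set U : Set Ω := (⋃ i, E i) ∪ (⋃ j, E' j) with hUdef
  set L : Set Ω := Uᶜ with hLdef
  have hUm : MeasurableSet U := ((MeasurableSet.iUnion hEm).union (MeasurableSet.iUnion hE'm))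
  have hLm : MeasurableSet L := hUm.compl
  have hνE : ν (⋃ i, E i) = (m : ℝ≥0∞) * c := by
    rw [measure_iUnion hEd hEm]
    simp [hEv, tsum_fintype, Finset.sum_const, mul_comm]
  have hνE' : ν (⋃ j, E' j) = (m' : ℝ≥0∞) * c := by
    rw [measure_iUnion hE'd hE'm]
    simp [hE'v, tsum_fintype, Finset.sum_const, mul_comm]
  have hdisjUU : Disjoint (⋃ i, E i) (⋃ j, E' j) := by
    refine Disjoint.mono ?_ ?_ (disjoint_compl_right (a := S))
    · exact Set.iUnion_subset hEsub
    · exact Set.iUnion_subset hE'sub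
  have hνU : ν U = ((m + m' : ℕ) : ℝ≥0∞) * c := by
    rw [hUdef, measure_union hdisjUU (MeasurableSet.iUnion hE'm), hνE, hνE']
    push_cast; ring
  have hνL : ν L = 1 - ((m + m' : ℕ) : ℝ≥0∞) * c := by
    rw [hLdef, measure_compl hUm (measure_ne_top ν U), hνU, measure_univ]
  have hL0 : m + m' = N → ν L = 0 := by
    intro h
    rw [hνL, h, hNc, tsub_self]
  have hL1 : m + m' = N - 1 → ν L = c := by
    intro h
    have hNN : (N - 1 : ℕ) + 1 = N := by omega
    have hsum : (1 : ℝ≥0∞) = c + ((m + m' : ℕ) : ℝ≥0∞) * c := by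
      rw [h]
      calc (1 : ℝ≥0∞) = (N : ℝ≥0∞) * c := hNc.symm
        _ = (((N - 1 : ℕ) + 1 : ℕ) : ℝ≥0∞) * c := by rw [hNN]
        _ = c + ((N - 1 : ℕ) : ℝ≥0∞) * c := by push_cast; ring
    rw [hνL]
    exact ENNReal.sub_eq_of_eq_add
      (ENNReal.mul_ne_top (ENNReal.natCast_ne_top _) hcne) hsum
  -- define the partition
  set g : Fin N → Set Ω := fun k =>
    if h : (k : ℕ) < m then E ⟨k, h⟩
    else if h' : (k : ℕ) - m < m' then E' ⟨(k : ℕ) - m, h'⟩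
    else L with hgdef
  have hg1 : ∀ (k : Fin N) (h : (k : ℕ) < m), g k = E ⟨k, h⟩ := by
    intro k h; rw [hgdef]; simp only [dif_pos h]
  have hg2 : ∀ (k : Fin N) (h1 : ¬(k : ℕ) < m) (h2 : (k : ℕ) - m < m'),
      g k = E' ⟨(k : ℕ) - m, h2⟩ := by
    intro k h1 h2; rw [hgdef]; simp only [dif_neg h1, dif_pos h2]
  have hg3 : ∀ (k : Fin N) (h1 : ¬(k : ℕ) < m) (h2 : ¬(k : ℕ) - m < m'), g k = L := by
    intro k h1 h2; rw [hgdef]; simp only [dif_neg h1, dif_neg h2]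
  have hgm : ∀ k, MeasurableSet (g k) := by
    intro k
    by_cases h1 : (k : ℕ) < m
    · rw [hg1 k h1]; exact hEm _
    · by_cases h2 : (k : ℕ) - m < m'
      · rw [hg2 k h1 h2]; exact hE'm _
      · rw [hg3 k h1 h2]; exact hLm
  have hEU : ∀ i, E i ⊆ U := fun i => (Set.subset_iUnion E i).trans Set.subset_union_left
  have hE'U : ∀ j, E' j ⊆ U := fun j => (Set.subset_iUnion E' j).trans Set.subset_union_right
  have hgdisj : ∀ i j : Fin N, (i : ℕ) < (j : ℕ) → Disjoint (g i) (g j) := by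
    intro i j hij
    have hjN : (j : ℕ) < N := j.2
    by_cases hi1 : (i : ℕ) < m
    · rw [hg1 i hi1]
      by_cases hj1 : (j : ℕ) < m
      · rw [hg1 j hj1]
        exact hEd (Fin.ne_of_val_ne (by simpa using hij.ne))
      · by_cases hj2 : (j : ℕ) - m < m'
        · rw [hg2 j hj1 hj2]
          exact Disjoint.mono (hEsub _) (hE'sub _) (disjoint_compl_right (a := S))
        · rw [hg3 j hj1 hj2]
          exact disjoint_compl_right.mono_left (hEU _)
    · by_cases hi2 : (i : ℕ) - m < m'
      · rw [hg2 i hi1 hi2]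
        by_cases hj1 : (j : ℕ) < m
        · exact absurd hj1 (by omega)
        · by_cases hj2 : (j : ℕ) - m < m'
          · rw [hg2 j hj1 hj2]
            refine hE'd (Fin.ne_of_val_ne ?_)
            simp only []
            omega
          · rw [hg3 j hj1 hj2]
            exact disjoint_compl_right.mono_left (hE'U _)
      · exact absurd hNmm' (by omega)
  set D : Fin N → Set Ω := fun k => if (k : ℕ) = N - 1 then g k ∪ L else g k with hDdef
  have hD1 : ∀ (k : Fin N), (k : ℕ) = N - 1 → D k = g k ∪ L := by
    intro k h; rw [hDdef]; simp only [if_pos h]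
  have hD2 : ∀ (k : Fin N), (k : ℕ) ≠ N - 1 → D k = g k := by
    intro k h; rw [hDdef]; simp only [if_neg h]
  have hgsubD : ∀ k, g k ⊆ D k := by
    intro k
    by_cases h : (k : ℕ) = N - 1
    · rw [hD1 k h]; exact Set.subset_union_left
    · rw [hD2 k h]
  have hbranch : ∀ k : Fin N, (k : ℕ) ≠ N - 1 → ((k : ℕ) < m ∨ (k : ℕ) - m < m') := by
    intro k hk
    have := k.2
    omega
  have hgU : ∀ k : Fin N, (k : ℕ) ≠ N - 1 → g k ⊆ U := by
    intro k hk
    rcases hbranch k hk with h | h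
    · rw [hg1 k h]; exact hEU _
    · by_cases h1 : (k : ℕ) < m
      · rw [hg1 k h1]; exact hEU _
      · rw [hg2 k h1 h]; exact hE'U _
  refine ⟨D, ?_, ?_, ?_, ?_, ?_, ?_⟩
  · -- measurability
    intro k
    by_cases h : (k : ℕ) = N - 1
    · rw [hD1 k h]; exact (hgm k).union hLm
    · rw [hD2 k h]; exact hgm k
  · -- pairwise disjoint
    have key : ∀ i j : Fin N, (i : ℕ) < (j : ℕ) → Disjoint (D i) (D j) := by
      intro i j hij
      have hjN : (j : ℕ) < N := j.2
      have hiN : (i : ℕ) ≠ N - 1 := by omega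
      rw [hD2 i hiN]
      by_cases hj : (j : ℕ) = N - 1
      · rw [hD1 j hj]
        exact Set.disjoint_union_right.mpr
          ⟨hgdisj i j hij, disjoint_compl_right.mono_left (hgU i hiN)⟩
      · rw [hD2 j hj]
        exact hgdisj i j hij
    intro i j hij
    have hv : (i : ℕ) ≠ (j : ℕ) := fun h => hij (Fin.ext h)
    rcases lt_or_gt_of_ne hv with h | h
    · exact key i j h
    · exact (key j i h).symm
  · -- union is univ
    apply Set.eq_univ_of_univ_subset
    intro x _
    have hx : x ∈ U ∪ L := by rw [hLdef, Set.union_compl_self]; trivial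
    rcases hx with hx | hx
    · rcases hx with hx | hx
      · obtain ⟨t, ⟨i, rfl⟩, hxt⟩ := hx
        refine Set.mem_iUnion.mpr ⟨⟨i.1, lt_of_lt_of_le i.2 hmN⟩, ?_⟩
        apply hgsubD
        rw [hg1 _ i.2]
        simpa using hxt
      · obtain ⟨t, ⟨j, rfl⟩, hxt⟩ := hx
        have hlt : m + j.1 < N := by have := j.2; omega
        refine Set.mem_iUnion.mpr ⟨⟨m + j.1, hlt⟩, ?_⟩
        apply hgsubD
        rw [hg2 ⟨m + j.1, hlt⟩ (by simp) (by simpa using j.2)]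
        have : (⟨(m + j.1) - m, by simpa using j.2⟩ : Fin m') = j := by
          apply Fin.ext; simp
        rw [this]
        exact hxt
    · refine Set.mem_iUnion.mpr ⟨⟨N - 1, by omega⟩, ?_⟩
      rw [hD1 ⟨N - 1, by omega⟩ rfl]
      exact Set.mem_union_right _ hx
  · -- measures
    intro k
    show ν (D k) = c
    by_cases hk : (k : ℕ) = N - 1
    · rw [hD1 k hk]
      by_cases hk1 : (k : ℕ) < m
      · have hLz : ν L = 0 := hL0 (by omega)
        refine le_antisymm ((measure_union_le _ _).trans ?_) ?_
        · rw [hg1 k hk1, hEv, hLz, add_zero]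
        · rw [← hEv ⟨k, hk1⟩, ← hg1 k hk1]
          exact measure_mono Set.subset_union_left
      · by_cases hk2 : (k : ℕ) - m < m'
        · have hLz : ν L = 0 := hL0 (by omega)
          refine le_antisymm ((measure_union_le _ _).trans ?_) ?_
          · rw [hg2 k hk1 hk2, hE'v, hLz, add_zero]
          · rw [← hE'v ⟨(k : ℕ) - m, hk2⟩, ← hg2 k hk1 hk2]
            exact measure_mono Set.subset_union_left
        · rw [hg3 k hk1 hk2, Set.union_self]
          exact hL1 (by omega)
    · rw [hD2 k hk]
      rcases hbranch k hk with h | h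
      · rw [hg1 k h]; exact hEv _
      · by_cases h1 : (k : ℕ) < m
        · rw [hg1 k h1]; exact hEv _
        · rw [hg2 k h1 h]; exact hE'v _
  · -- count of pieces inside S
    have hin : ∀ k : Fin N, (k : ℕ) < m → ν (D k \ S) = 0 := by
      intro k hk
      have hgS : g k ⊆ S := by rw [hg1 k hk]; exact hEsub _
      by_cases h : (k : ℕ) = N - 1
      · have hLz : ν L = 0 := hL0 (by omega)
        refine measure_mono_null ?_ hLz
        rw [hD1 k h]
        intro x hx
        rcases hx.1 with h' | h'
        · exact absurd (hgS h') hx.2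
        · exact h'
      · rw [hD2 k h]
        rw [Set.diff_eq_empty.mpr hgS]
        exact measure_empty
    have hcard : (Finset.univ : Finset (Fin m)).card ≤
        (Finset.univ.filter fun k => ν (D k \ S) = 0).card := by
      apply Finset.card_le_card_of_injOn
        (fun i => (⟨i.1, lt_of_lt_of_le i.2 hmN⟩ : Fin N))
      · intro i _
        simp only [Finset.mem_coe, Finset.mem_filter, Finset.mem_univ, true_and]
        exact hin ⟨i.1, lt_of_lt_of_le i.2 hmN⟩ i.2
      · intro i _ j _ h
        apply Fin.ext
        simpa using h
    have h2 := hcard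
    simp only [Finset.card_univ, Fintype.card_fin] at h2
    convert h2 using 3

  · -- count of pieces inside Sᶜ
    have hin : ∀ k : Fin N, m ≤ (k : ℕ) → (k : ℕ) - m < m' → ν (D k ∩ S) = 0 := by
      intro k hk1 hk2
      have hgS : g k ⊆ Sᶜ := by rw [hg2 k (by omega) hk2]; exact hE'sub _
      by_cases h : (k : ℕ) = N - 1
      · have hLz : ν L = 0 := hL0 (by omega)
        refine measure_mono_null ?_ hLz
        rw [hD1 k h]
        intro x hx
        rcases hx.1 with h' | h'
        · exact absurd hx.2 (hgS h')
        · exact h'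
      · rw [hD2 k h]
        have : g k ∩ S = ∅ := by
          apply Set.eq_empty_of_forall_notMem
          intro x hx
          exact (hgS hx.1) hx.2
        rw [this]
        exact measure_empty
    have hcard : (Finset.univ : Finset (Fin m')).card ≤
        (Finset.univ.filter fun k => ν (D k ∩ S) = 0).card := by
      apply Finset.card_le_card_of_injOn
        (fun j => (⟨m + j.1, by have := j.2; omega⟩ : Fin N))
      · intro j _
        simp only [Finset.mem_coe, Finset.mem_filter, Finset.mem_univ, true_and]
        exact hin ⟨m + j.1, by have := j.2; omega⟩ (by simp) (by simpa using j.2)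
      · intro i _ j _ h
        apply Fin.ext
        have := congrArg Fin.val h
        simpa using this
    have h2 := hcard
    simp only [Finset.card_univ, Fintype.card_fin] at h2
    convert h2 using 3


/-- For an atomless probability measure `ν` and a measurable set `S`, `Ω` can be partitioned
into `2^n` measurable sets of equal measure `2^{-n}` such that at least `⌊2^n ν(S)⌋` of them
are (ν-essentially) contained in `S`, and at least `⌊2^n ν(Ω \ S)⌋` of them are
(ν-essentially) contained in the complement of `S`. -/
theorem exists_equal_measure_partition_adapted_to_set
    {Ω : Type*} [MeasurableSpace Ω] (ν : Measure Ω) [IsProbabilityMeasure ν]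
    (hatomless : ∀ A : Set Ω, MeasurableSet A → 0 < ν A →
      ∃ B ⊆ A, MeasurableSet B ∧ 0 < ν B ∧ ν B < ν A)
    (S : Set Ω) (hS : MeasurableSet S) (n : ℕ) :
    ∃ D : Fin (2 ^ n) → Set Ω,
      (∀ k, MeasurableSet (D k)) ∧
      Pairwise (Function.onFun Disjoint D) ∧
      (⋃ k, D k) = Set.univ ∧
      (∀ k, ν (D k) = (2 ^ n : ℝ≥0∞)⁻¹) ∧
      ⌊(2 ^ n : ℝ) * (ν S).toReal⌋₊ ≤
        (Finset.univ.filter fun k => ν (D k \ S) = 0).card ∧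
      ⌊(2 ^ n : ℝ) * (ν Sᶜ).toReal⌋₊ ≤
        (Finset.univ.filter fun k => ν (D k ∩ S) = 0).card := by
  exact main_thm ν hatomless S hS n
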